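/- Let $(\Omega_1, \mathcal{A}_1, \mathbb{P}_1)$ and $(\Omega_2, \mathcal{A}_2, \mathbb{P}_2)$ be probability spaces with $\mathbb{P} = \mathbb{P}_1 \times \mathbb{P}_2$, and let $\mathcal{G}_1 \subseteq \mathcal{A}_1$, $\mathcal{G}_2 \subseteq \mathcal{A}_2$ be sub-$\sigma$-algebras. For any integrable random variable $Y$ on the product space, the conditional expectation satisfies the iterated formula $\mathbb{E}[Y \mid \mathcal{G}_1 \otimes \mathcal{G}_2] = \mathbb{E}_1[\mathbb{E}_2[Y \mid \mathcal{G}_2] \mid \mathcal{G}_1]$ almost surely, where $\mathbb{E}_2[\cdot \mid \mathcal{G}_2]$ denotes conditional expectation in the second variable only (treating the first as a parameter) and $\mathbb{E}_1$ analogously. -/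

import Mathlib

open MeasureTheory

section StmtAux
open Set


section Aux
variable {Ω : Type*}

lemma mul_indicator_one_eq (f : Ω → ℝ) (s : Set Ω) :
    (fun x => f x * s.indicator (fun _ => (1:ℝ)) x) = s.indicator f := by
  funext x; by_cases h : x ∈ s <;> simp [h]

lemma indicator_one_mul_eq (f : Ω → ℝ) (s : Set Ω) :
    (fun x => s.indicator (fun _ => (1:ℝ)) x * f x) = s.indicator f := by
  funext x; by_cases h : x ∈ s <;> simp [h]

lemma integrable_ind {m0 : MeasurableSpace Ω} {μ : Measure Ω} [IsFiniteMeasure μ]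
    {s : Set Ω} (hs : MeasurableSet s) : Integrable (s.indicator (fun _ => (1:ℝ))) μ :=
  (integrable_const (1:ℝ)).indicator hs

/-- `∫_b E[1_a|G] = ∫ E[1_a|G] * E[1_b|G]`. -/
lemma integral_indicator_condexp_mul {G m0 : MeasurableSpace Ω}
    (hG : G ≤ m0) (μ : Measure Ω) [IsFiniteMeasure μ]
    {a b : Set Ω} (ha : MeasurableSet a) (hb : MeasurableSet b) :
    ∫ x in b, (μ[a.indicator (fun _ => (1:ℝ)) | G]) x ∂μ
      = ∫ x, (μ[a.indicator (fun _ => (1:ℝ)) | G]) x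
          * (μ[b.indicator (fun _ => (1:ℝ)) | G]) x ∂μ := by
  set F := μ[a.indicator (fun _ => (1:ℝ)) | G] with hF
  have hint : Integrable (fun x => F x * b.indicator (fun _ => (1:ℝ)) x) μ := by
    rw [mul_indicator_one_eq]
    exact integrable_condExp.indicator hb
  have hpull : μ[(fun x => F x * b.indicator (fun _ => (1:ℝ)) x) | G]
      =ᵐ[μ] fun x => F x * (μ[b.indicator (fun _ => (1:ℝ)) | G]) x :=
    condExp_mul_of_stronglyMeasurable_left stronglyMeasurable_condExp hint (integrable_ind hb)
  have h1 : ∫ x in b, F x ∂μ = ∫ x, F x * b.indicator (fun _ => (1:ℝ)) x ∂μ := by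
    rw [mul_indicator_one_eq, integral_indicator hb]
  have h2 : ∫ x, (μ[(fun x => F x * b.indicator (fun _ => (1:ℝ)) x) | G]) x ∂μ
      = ∫ x, F x * b.indicator (fun _ => (1:ℝ)) x ∂μ := integral_condExp hG
  rw [h1, ← h2]
  exact integral_congr_ae hpull

lemma integral_indicator_condexp_symm {G m0 : MeasurableSpace Ω}
    (hG : G ≤ m0) (μ : Measure Ω) [IsFiniteMeasure μ]
    {s t : Set Ω} (hs : MeasurableSet s) (ht : MeasurableSet t) :
    ∫ x in t, (μ[s.indicator (fun _ => (1:ℝ)) | G]) x ∂μ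
      = ∫ x in s, (μ[t.indicator (fun _ => (1:ℝ)) | G]) x ∂μ := by
  rw [integral_indicator_condexp_mul hG μ hs ht,
    integral_indicator_condexp_mul hG μ ht hs]
  simp_rw [mul_comm]

end Aux


section Prodd
variable {Ω₁ Ω₂ : Type*}

lemma my_prod_le_prod {a₁ b₁ : MeasurableSpace Ω₁} {a₂ b₂ : MeasurableSpace Ω₂}
    (h₁ : a₁ ≤ b₁) (h₂ : a₂ ≤ b₂) : a₁.prod a₂ ≤ b₁.prod b₂ :=
  sup_le ((MeasurableSpace.comap_mono h₁).trans le_sup_left)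
    ((MeasurableSpace.comap_mono h₂).trans le_sup_right)

lemma my_measurable_fst (a : MeasurableSpace Ω₁) (b : MeasurableSpace Ω₂) :
    Measurable[a.prod b, a] Prod.fst :=
  measurable_iff_comap_le.mpr le_sup_left

lemma my_measurable_snd (a : MeasurableSpace Ω₁) (b : MeasurableSpace Ω₂) :
    Measurable[a.prod b, b] Prod.snd :=
  measurable_iff_comap_le.mpr le_sup_right

lemma my_generateFrom_prod (a : MeasurableSpace Ω₁) (b : MeasurableSpace Ω₂) :
    a.prod b = MeasurableSpace.generateFrom
      (image2 (· ×ˢ ·) { s : Set Ω₁ | MeasurableSet[a] s } { t : Set Ω₂ | MeasurableSet[b] t }) :=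
  (@generateFrom_prod _ _ a b).symm
end Prodd

section Tensor
variable {Ω₁ Ω₂ : Type*} (g₁ : MeasurableSpace Ω₁) (g₂ : MeasurableSpace Ω₂)
  {m₁ : MeasurableSpace Ω₁} {m₂ : MeasurableSpace Ω₂}
  (P₁ : Measure Ω₁) (P₂ : Measure Ω₂)
  [IsProbabilityMeasure P₁] [IsProbabilityMeasure P₂]

lemma my_condexp_tensor (hg₁ : g₁ ≤ m₁) (hg₂ : g₂ ≤ m₂)
    {u : Ω₁ → ℝ} {v : Ω₂ → ℝ} (hu : Integrable u P₁) (hv : Integrable v P₂) :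
    (P₁.prod P₂)[fun ω => u ω.1 * v ω.2 | g₁.prod g₂]
      =ᵐ[P₁.prod P₂] fun ω => (P₁[u|g₁]) ω.1 * (P₂[v|g₂]) ω.2 := by
  have hG : g₁.prod g₂ ≤ (inferInstance : MeasurableSpace (Ω₁ × Ω₂)) :=
    my_prod_le_prod hg₁ hg₂
  have hY : Integrable (fun ω : Ω₁ × Ω₂ => u ω.1 * v ω.2) (P₁.prod P₂) := hu.mul_prod hv
  have hcand : Integrable (fun ω : Ω₁ × Ω₂ => (P₁[u|g₁]) ω.1 * (P₂[v|g₂]) ω.2) (P₁.prod P₂) :=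
    integrable_condExp.mul_prod integrable_condExp
  have htot : ∫ ω, (P₁[u|g₁]) ω.1 * (P₂[v|g₂]) ω.2 ∂(P₁.prod P₂)
      = ∫ ω, u ω.1 * v ω.2 ∂(P₁.prod P₂) := by
    rw [integral_prod_mul, integral_prod_mul, integral_condExp hg₁, integral_condExp hg₂]
  have hset : ∀ s : Set (Ω₁ × Ω₂), MeasurableSet[g₁.prod g₂] s →
      ∫ ω in s, (P₁[u|g₁]) ω.1 * (P₂[v|g₂]) ω.2 ∂(P₁.prod P₂)
        = ∫ ω in s, u ω.1 * v ω.2 ∂(P₁.prod P₂) := by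
    intro s hs
    refine MeasurableSpace.induction_on_inter (m := g₁.prod g₂)
      (C := fun s _ => ∫ ω in s, (P₁[u|g₁]) ω.1 * (P₂[v|g₂]) ω.2 ∂(P₁.prod P₂)
        = ∫ ω in s, u ω.1 * v ω.2 ∂(P₁.prod P₂))
      (my_generateFrom_prod g₁ g₂) (@isPiSystem_prod _ _ g₁ g₂) (by simp) ?_ ?_ ?_ _ hs
    · rintro _ ⟨A, hA, B, hB, rfl⟩
      rw [← Measure.prod_restrict, integral_prod_mul, integral_prod_mul,
        setIntegral_condExp hg₁ hu hA, setIntegral_condExp hg₂ hv hB]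
    · intro t htm ht
      have htm' := hG _ htm
      have e1 := integral_add_compl htm' hcand
      have e2 := integral_add_compl htm' hY
      rw [htot] at e1
      rw [ht] at e1
      linarith
    · intro f hdisj hfm hf
      rw [integral_iUnion (fun i => hG _ (hfm i)) hdisj hcand.integrableOn,
        integral_iUnion (fun i => hG _ (hfm i)) hdisj hY.integrableOn]
      exact tsum_congr hf
  refine (ae_eq_condExp_of_forall_setIntegral_eq hG hY
    (fun s _ _ => hcand.integrableOn) (fun s hs _ => hset s hs) ?_).symm
  exact ((stronglyMeasurable_condExp.comp_measurable (my_measurable_fst g₁ g₂)).mul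
    (stronglyMeasurable_condExp.comp_measurable (my_measurable_snd g₁ g₂))).aestronglyMeasurable

end Tensor

section Base
variable {Ω₁ Ω₂ : Type*} (g₁ : MeasurableSpace Ω₁) (g₂ : MeasurableSpace Ω₂)
  {m₁ : MeasurableSpace Ω₁} {m₂ : MeasurableSpace Ω₂}
  (P₁ : Measure Ω₁) (P₂ : Measure Ω₂)
  [IsProbabilityMeasure P₁] [IsProbabilityMeasure P₂]

lemma my_indicator_prod (A : Set Ω₁) (B : Set Ω₂) :
    (A ×ˢ B).indicator (fun _ => (1:ℝ))
      = fun ω : Ω₁ × Ω₂ => A.indicator (fun _ => (1:ℝ)) ω.1 * B.indicator (fun _ => (1:ℝ)) ω.2 := by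
  funext ω
  by_cases h1 : ω.1 ∈ A <;> by_cases h2 : ω.2 ∈ B <;>
    simp [Set.indicator_apply, Set.mem_prod, h1, h2]

lemma my_toReal_diff {Ω : Type*} {m0 : MeasurableSpace Ω} (μ : Measure Ω) [IsFiniteMeasure μ]
    (s t : Set Ω) (ht : MeasurableSet t) :
    (μ (s ∩ tᶜ)).toReal = (μ s).toReal - (μ (s ∩ t)).toReal := by
  have h := measure_inter_add_diff (μ := μ) s ht
  rw [Set.diff_eq] at h
  rw [← h, ENNReal.toReal_add (measure_ne_top μ _) (measure_ne_top μ _)]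
  ring

lemma my_tsum_inter {Ω : Type*} {m0 : MeasurableSpace Ω} (μ : Measure Ω) [IsFiniteMeasure μ]
    {s : Set Ω} (hs : MeasurableSet s) {f : ℕ → Set Ω}
    (hdisj : Pairwise (Function.onFun Disjoint f)) (hfm : ∀ i, MeasurableSet (f i)) :
    (μ (s ∩ ⋃ i, f i)).toReal = ∑' i, (μ (s ∩ f i)).toReal := by
  rw [Set.inter_iUnion,
    measure_iUnion (fun i j hij => ((hdisj hij).mono Set.inter_subset_right
      Set.inter_subset_right)) (fun i => hs.inter (hfm i)),
    ENNReal.tsum_toReal_eq (fun i => measure_ne_top μ _)]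

lemma my_base (hg₁ : g₁ ≤ m₁) (hg₂ : g₂ ≤ m₂)
    {A : Set Ω₁} (hA : MeasurableSet[g₁] A) {B : Set Ω₂} (hB : MeasurableSet[m₂] B)
    {t : Set (Ω₁ × Ω₂)} (ht : MeasurableSet[m₁.prod g₂] t) :
    ∫ x in t, ((P₁.prod P₂)[(A ×ˢ B).indicator (fun _ => (1:ℝ)) | g₁.prod g₂]) x ∂(P₁.prod P₂)
      = ((P₁.prod P₂) ((A ×ˢ B) ∩ t)).toReal := by
  have hG : g₁.prod g₂ ≤ (inferInstance : MeasurableSpace (Ω₁ × Ω₂)) :=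
    my_prod_le_prod hg₁ hg₂
  have hmg : m₁.prod g₂ ≤ (inferInstance : MeasurableSpace (Ω₁ × Ω₂)) :=
    my_prod_le_prod le_rfl hg₂
  set k := (P₁.prod P₂)[(A ×ˢ B).indicator (fun _ => (1:ℝ)) | g₁.prod g₂] with hk
  have hkint : Integrable k (P₁.prod P₂) := integrable_condExp
  have htotk : ∫ x, k x ∂(P₁.prod P₂) = ((P₁.prod P₂) (A ×ˢ B)).toReal := by
    rw [hk, integral_condExp hG, integral_indicator ((hg₁ _ hA).prod hB),
      setIntegral_const, smul_eq_mul, mul_one, measureReal_def]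
  refine MeasurableSpace.induction_on_inter (m := m₁.prod g₂)
    (C := fun t _ => ∫ x in t, k x ∂(P₁.prod P₂) = ((P₁.prod P₂) ((A ×ˢ B) ∩ t)).toReal)
    (my_generateFrom_prod m₁ g₂) (@isPiSystem_prod _ _ m₁ g₂) (by simp) ?_ ?_ ?_ _ ht
  · -- rectangles C ×ˢ D with C ∈ m₁, D ∈ g₂
    rintro _ ⟨C, hC, D, hD, rfl⟩
    have hcongr : k =ᵐ[P₁.prod P₂]
        fun ω => (P₁[A.indicator (fun _ => (1:ℝ))|g₁]) ω.1
          * (P₂[B.indicator (fun _ => (1:ℝ))|g₂]) ω.2 := by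
      rw [hk, my_indicator_prod]
      exact my_condexp_tensor g₁ g₂ P₁ P₂ hg₁ hg₂ (integrable_ind (hg₁ _ hA)) (integrable_ind hB)
    rw [setIntegral_congr_ae (hmg _ (by exact hC.prod hD)) (hcongr.mono fun x hx _ => hx),
      ← Measure.prod_restrict, integral_prod_mul,
      integral_indicator_condexp_symm hg₁ P₁ (hg₁ _ hA) hC,
      setIntegral_condExp hg₁ (integrable_ind hC) hA,
      setIntegral_condExp hg₂ (integrable_ind hB) hD,
      setIntegral_indicator hC, setIntegral_indicator hB,
      setIntegral_const, setIntegral_const, smul_eq_mul, smul_eq_mul, mul_one, mul_one,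
      Set.prod_inter_prod, Measure.prod_prod, ENNReal.toReal_mul, Set.inter_comm D B, measureReal_def, measureReal_def]
  · intro t htm htC
    have e := integral_add_compl (hmg _ htm) hkint
    rw [htC, htotk] at e
    rw [my_toReal_diff (P₁.prod P₂) _ _ (hmg _ htm)]
    linarith
  · intro f hdisj hfm hC
    rw [integral_iUnion (fun i => hmg _ (hfm i)) hdisj hkint.integrableOn,
      my_tsum_inter (P₁.prod P₂) ((hg₁ _ hA).prod hB) hdisj (fun i => hmg _ (hfm i))]
    exact tsum_congr hC

end Base

section KeyC
variable {Ω₁ Ω₂ : Type*} (g₁ : MeasurableSpace Ω₁) (g₂ : MeasurableSpace Ω₂)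
  {m₁ : MeasurableSpace Ω₁} {m₂ : MeasurableSpace Ω₂}
  (P₁ : Measure Ω₁) (P₂ : Measure Ω₂)
  [IsProbabilityMeasure P₁] [IsProbabilityMeasure P₂]

lemma my_keyC (hg₁ : g₁ ≤ m₁) (hg₂ : g₂ ≤ m₂)
    {s : Set (Ω₁ × Ω₂)} (hs : MeasurableSet[g₁.prod m₂] s)
    {t : Set (Ω₁ × Ω₂)} (ht : MeasurableSet[m₁.prod g₂] t) :
    ∫ x in t, ((P₁.prod P₂)[s.indicator (fun _ => (1:ℝ)) | g₁.prod g₂]) x ∂(P₁.prod P₂)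
      = ((P₁.prod P₂) (s ∩ t)).toReal := by
  have hG : g₁.prod g₂ ≤ (inferInstance : MeasurableSpace (Ω₁ × Ω₂)) :=
    my_prod_le_prod hg₁ hg₂
  have hmg : m₁.prod g₂ ≤ (inferInstance : MeasurableSpace (Ω₁ × Ω₂)) :=
    my_prod_le_prod le_rfl hg₂
  have hn : g₁.prod m₂ ≤ (inferInstance : MeasurableSpace (Ω₁ × Ω₂)) :=
    my_prod_le_prod hg₁ le_rfl
  refine MeasurableSpace.induction_on_inter (m := g₁.prod m₂)
    (C := fun s _ => ∀ ⦃t : Set (Ω₁ × Ω₂)⦄, MeasurableSet[m₁.prod g₂] t →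
      ∫ x in t, ((P₁.prod P₂)[s.indicator (fun _ => (1:ℝ)) | g₁.prod g₂]) x ∂(P₁.prod P₂)
        = ((P₁.prod P₂) (s ∩ t)).toReal)
    (my_generateFrom_prod g₁ m₂) (@isPiSystem_prod _ _ g₁ m₂) ?_ ?_ ?_ ?_ _ hs ht
  · intro t ht
    rw [show (Set.indicator (∅ : Set (Ω₁ × Ω₂)) fun _ => (1:ℝ)) = (0 : Ω₁ × Ω₂ → ℝ) by
        funext x; simp, condExp_zero]
    simp
  · rintro _ ⟨A, hA, B, hB, rfl⟩ t ht
    exact my_base g₁ g₂ P₁ P₂ hg₁ hg₂ hA hB ht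
  · intro s hsm hC t ht
    have hcompl : sᶜ.indicator (fun _ => (1:ℝ))
        = (fun _ => (1:ℝ)) - s.indicator (fun _ => (1:ℝ)) := by
      funext x; by_cases h : x ∈ s <;> simp [h]
    have hcond : (P₁.prod P₂)[sᶜ.indicator (fun _ => (1:ℝ)) | g₁.prod g₂]
        =ᵐ[P₁.prod P₂] fun x => 1 - ((P₁.prod P₂)[s.indicator (fun _ => (1:ℝ)) | g₁.prod g₂]) x := by
      rw [hcompl]
      refine (condExp_sub (integrable_const (1:ℝ)) (integrable_ind (hn _ hsm)) (g₁.prod g₂)).trans ?_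
      rw [condExp_const hG]
      exact Filter.Eventually.of_forall fun x => rfl
    rw [setIntegral_congr_ae (hmg _ ht) (hcond.mono fun x hx _ => hx)]
    rw [integral_sub (integrable_const (1:ℝ)) integrable_condExp.integrableOn,
      setIntegral_const, smul_eq_mul, mul_one, hC ht,
      Set.inter_comm sᶜ t, my_toReal_diff (P₁.prod P₂) t s (hn _ hsm), Set.inter_comm t s,
        measureReal_def]
  · intro f hdisj hfm hC t ht
    have hfmamb : ∀ i, MeasurableSet (f i) := fun i => hn _ (hfm i)
    have hUamb : MeasurableSet (⋃ i, f i) := MeasurableSet.iUnion hfmamb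
    rw [integral_indicator_condexp_symm hG (P₁.prod P₂) hUamb (hmg _ ht),
      integral_iUnion hfmamb hdisj integrable_condExp.integrableOn]
    have : ∀ i, ∫ x in f i, ((P₁.prod P₂)[t.indicator (fun _ => (1:ℝ)) | g₁.prod g₂]) x ∂(P₁.prod P₂)
        = ((P₁.prod P₂) (f i ∩ t)).toReal := fun i => by
      rw [← integral_indicator_condexp_symm hG (P₁.prod P₂) (hfmamb i) (hmg _ ht)]
      exact hC i ht
    rw [tsum_congr this, Set.inter_comm _ t,
      my_tsum_inter (P₁.prod P₂) (hmg _ ht) hdisj hfmamb]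
    exact tsum_congr fun i => by rw [Set.inter_comm]

end KeyC

section Final
variable {Ω₁ Ω₂ : Type*} (g₁ : MeasurableSpace Ω₁) (g₂ : MeasurableSpace Ω₂)
  {m₁ : MeasurableSpace Ω₁} {m₂ : MeasurableSpace Ω₂}
  (P₁ : Measure Ω₁) (P₂ : Measure Ω₂)
  [IsProbabilityMeasure P₁] [IsProbabilityMeasure P₂]

/-- Claim D: for `s ∈ 𝒢₁ ⊗ 𝒜₂`, conditioning `1_s` on `𝒜₁ ⊗ 𝒢₂` is the same as conditioning
on `𝒢₁ ⊗ 𝒢₂`. -/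
lemma my_claimD (hg₁ : g₁ ≤ m₁) (hg₂ : g₂ ≤ m₂)
    {s : Set (Ω₁ × Ω₂)} (hs : MeasurableSet[g₁.prod m₂] s) :
    (P₁.prod P₂)[s.indicator (fun _ => (1:ℝ)) | g₁.prod g₂]
      =ᵐ[P₁.prod P₂] (P₁.prod P₂)[s.indicator (fun _ => (1:ℝ)) | m₁.prod g₂] := by
  have hmg : m₁.prod g₂ ≤ (inferInstance : MeasurableSpace (Ω₁ × Ω₂)) :=
    my_prod_le_prod le_rfl hg₂
  have hn : g₁.prod m₂ ≤ (inferInstance : MeasurableSpace (Ω₁ × Ω₂)) :=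
    my_prod_le_prod hg₁ le_rfl
  refine ae_eq_condExp_of_forall_setIntegral_eq hmg (integrable_ind (hn _ hs))
    (fun t _ _ => integrable_condExp.integrableOn) (fun t htm _ => ?_) ?_
  · rw [my_keyC g₁ g₂ P₁ P₂ hg₁ hg₂ hs htm, setIntegral_indicator (hn _ hs),
      setIntegral_const, smul_eq_mul, mul_one, Set.inter_comm, measureReal_def]
  · exact (stronglyMeasurable_condExp.mono
      (my_prod_le_prod hg₁ (le_refl g₂))).aestronglyMeasurable

/-- Step 2: set-integral identity for `Z` measurable w.r.t. `𝒜₁ ⊗ 𝒢₂`. -/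
lemma my_step2 (hg₁ : g₁ ≤ m₁) (hg₂ : g₂ ≤ m₂)
    {Z : Ω₁ × Ω₂ → ℝ} (hZint : Integrable Z (P₁.prod P₂))
    (hZmeas : AEStronglyMeasurable[m₁.prod g₂] Z (P₁.prod P₂))
    {s : Set (Ω₁ × Ω₂)} (hs : MeasurableSet[g₁.prod m₂] s) :
    ∫ x in s, ((P₁.prod P₂)[Z | g₁.prod g₂]) x ∂(P₁.prod P₂)
      = ∫ x in s, Z x ∂(P₁.prod P₂) := by
  set P := P₁.prod P₂ with hP
  have hG : g₁.prod g₂ ≤ (inferInstance : MeasurableSpace (Ω₁ × Ω₂)) :=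
    my_prod_le_prod hg₁ hg₂
  have hmg : m₁.prod g₂ ≤ (inferInstance : MeasurableSpace (Ω₁ × Ω₂)) :=
    my_prod_le_prod le_rfl hg₂
  have hn : g₁.prod m₂ ≤ (inferInstance : MeasurableSpace (Ω₁ × Ω₂)) :=
    my_prod_le_prod hg₁ le_rfl
  have hs' : MeasurableSet s := hn _ hs
  set k := P[s.indicator (fun _ => (1:ℝ)) | g₁.prod g₂] with hk
  -- bound on k
  have hk0 : 0 ≤ᵐ[P] k := condExp_nonneg (Filter.Eventually.of_forall fun x =>
    Set.indicator_nonneg (fun _ _ => zero_le_one) x)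
  have hk1 : k ≤ᵐ[P] fun _ => (1:ℝ) := by
    refine (condExp_mono (integrable_ind hs') (integrable_const (1:ℝ))
      (Filter.Eventually.of_forall fun x => Set.indicator_le_self' (fun _ _ => zero_le_one) x)).trans ?_
    rw [condExp_const hG]
  have hkbdd : ∀ᵐ x ∂P, ‖k x‖ ≤ 1 := by
    filter_upwards [hk0, hk1] with x h0 h1
    have h0' : (0:ℝ) ≤ k x := h0
    rw [Real.norm_eq_abs, abs_le]
    exact ⟨by linarith, h1⟩
  -- step (3): ∫_s E[Z|G] = ∫ E[Z|G] * k
  have h3 : ∫ x in s, (P[Z | g₁.prod g₂]) x ∂P = ∫ x, (P[Z | g₁.prod g₂]) x * k x ∂P := by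
    have hint : Integrable (fun x => (P[Z | g₁.prod g₂]) x * s.indicator (fun _ => (1:ℝ)) x) P := by
      rw [mul_indicator_one_eq]; exact integrable_condExp.indicator hs'
    have hpull : P[(fun x => (P[Z | g₁.prod g₂]) x * s.indicator (fun _ => (1:ℝ)) x) | g₁.prod g₂]
        =ᵐ[P] fun x => (P[Z | g₁.prod g₂]) x * k x :=
      condExp_mul_of_stronglyMeasurable_left stronglyMeasurable_condExp hint (integrable_ind hs')
    have h1 : ∫ x in s, (P[Z | g₁.prod g₂]) x ∂P
        = ∫ x, (P[Z | g₁.prod g₂]) x * s.indicator (fun _ => (1:ℝ)) x ∂P := by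
      rw [mul_indicator_one_eq, integral_indicator hs']
    have h2 : ∫ x, (P[(fun x => (P[Z | g₁.prod g₂]) x * s.indicator (fun _ => (1:ℝ)) x) | g₁.prod g₂]) x ∂P
        = ∫ x, (P[Z | g₁.prod g₂]) x * s.indicator (fun _ => (1:ℝ)) x ∂P := integral_condExp hG
    rw [h1, ← h2]
    exact integral_congr_ae hpull
  -- step (4'): ∫ E[Z|G] * k = ∫ k * Z
  have h4 : ∫ x, (P[Z | g₁.prod g₂]) x * k x ∂P = ∫ x, k x * Z x ∂P := by
    have hkZ : Integrable (fun x => k x * Z x) P :=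
      hZint.bdd_mul (stronglyMeasurable_condExp.mono hG).aestronglyMeasurable hkbdd
    have hpull : P[(fun x => k x * Z x) | g₁.prod g₂]
        =ᵐ[P] fun x => k x * (P[Z | g₁.prod g₂]) x :=
      condExp_mul_of_stronglyMeasurable_left stronglyMeasurable_condExp hkZ hZint
    rw [← integral_condExp hG (f := fun x => k x * Z x), integral_congr_ae hpull]
    simp_rw [mul_comm]
  -- step (5'): ∫ k * Z = ∫_s Z using claim D and pull-out at m₁.prod g₂
  have h5 : ∫ x, k x * Z x ∂P = ∫ x in s, Z x ∂P := by
    have hD := my_claimD g₁ g₂ P₁ P₂ hg₁ hg₂ hs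
    have e1 : ∫ x, k x * Z x ∂P
        = ∫ x, (P[s.indicator (fun _ => (1:ℝ)) | m₁.prod g₂]) x * Z x ∂P := by
      refine integral_congr_ae ?_
      filter_upwards [hD] with x hx
      rw [hk, hx]
    have hZ1s : Integrable (fun x => Z x * s.indicator (fun _ => (1:ℝ)) x) P := by
      rw [mul_indicator_one_eq]; exact hZint.indicator hs'
    have hpull : P[(fun x => Z x * s.indicator (fun _ => (1:ℝ)) x) | m₁.prod g₂]
        =ᵐ[P] fun x => Z x * (P[s.indicator (fun _ => (1:ℝ)) | m₁.prod g₂]) x :=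
      condExp_mul_of_aestronglyMeasurable_left hZmeas hZ1s (integrable_ind hs')
    rw [e1]
    have e2 : ∫ x, Z x * (P[s.indicator (fun _ => (1:ℝ)) | m₁.prod g₂]) x ∂P
        = ∫ x, Z x * s.indicator (fun _ => (1:ℝ)) x ∂P := by
      rw [← integral_condExp hmg (f := fun x => Z x * s.indicator (fun _ => (1:ℝ)) x),
        integral_congr_ae hpull]
    calc ∫ x, (P[s.indicator (fun _ => (1:ℝ)) | m₁.prod g₂]) x * Z x ∂P
        = ∫ x, Z x * (P[s.indicator (fun _ => (1:ℝ)) | m₁.prod g₂]) x ∂P := by simp_rw [mul_comm]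
      _ = ∫ x, Z x * s.indicator (fun _ => (1:ℝ)) x ∂P := e2
      _ = ∫ x in s, Z x ∂P := by rw [mul_indicator_one_eq, integral_indicator hs']
  rw [h3, h4, h5]

end Final


end StmtAux

/-- Iterated conditional expectation on a product probability space:
`E[Y | 𝒢₁ ⊗ 𝒢₂] = E₁[E₂[Y | 𝒢₂] | 𝒢₁]` a.s., where conditioning "in the second
variable only" is conditioning on `𝒜₁ ⊗ 𝒢₂`, and applying `E₁[· | 𝒢₁]` afterwards
is conditioning on `𝒢₁ ⊗ 𝒜₂`. -/
theorem stmt2 {Ω₁ Ω₂ : Type*} (g₁ : MeasurableSpace Ω₁) (g₂ : MeasurableSpace Ω₂)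
    {m₁ : MeasurableSpace Ω₁} {m₂ : MeasurableSpace Ω₂}
    (P₁ : Measure Ω₁) (P₂ : Measure Ω₂)
    [IsProbabilityMeasure P₁] [IsProbabilityMeasure P₂]
    (hg₁ : g₁ ≤ m₁) (hg₂ : g₂ ≤ m₂)
    (Y : Ω₁ × Ω₂ → ℝ) (hY : Integrable Y (P₁.prod P₂)) :
    (P₁.prod P₂)[Y | g₁.prod g₂]
      =ᵐ[P₁.prod P₂] (P₁.prod P₂)[(P₁.prod P₂)[Y | m₁.prod g₂] | g₁.prod m₂] := by
  have hG : g₁.prod g₂ ≤ (inferInstance : MeasurableSpace (Ω₁ × Ω₂)) :=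
    my_prod_le_prod hg₁ hg₂
  have hmg : m₁.prod g₂ ≤ (inferInstance : MeasurableSpace (Ω₁ × Ω₂)) :=
    my_prod_le_prod le_rfl hg₂
  have hn : g₁.prod m₂ ≤ (inferInstance : MeasurableSpace (Ω₁ × Ω₂)) :=
    my_prod_le_prod hg₁ le_rfl
  refine ae_eq_condExp_of_forall_setIntegral_eq hn integrable_condExp
    (fun s _ _ => integrable_condExp.integrableOn) (fun s hsm _ => ?_) ?_
  · have h2 : (P₁.prod P₂)[(P₁.prod P₂)[Y | m₁.prod g₂] | g₁.prod g₂]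
        =ᵐ[P₁.prod P₂] (P₁.prod P₂)[Y | g₁.prod g₂] :=
      condExp_condExp_of_le (my_prod_le_prod hg₁ (le_refl g₂) :
        g₁.prod g₂ ≤ m₁.prod g₂) hmg
    rw [← setIntegral_congr_ae (hn _ hsm) (h2.mono fun x hx _ => hx)]
    exact my_step2 g₁ g₂ P₁ P₂ hg₁ hg₂ integrable_condExp
      stronglyMeasurable_condExp.aestronglyMeasurable hsm
  · exact (stronglyMeasurable_condExp.mono
      (my_prod_le_prod (le_refl g₁) hg₂)).aestronglyMeasurable
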